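/- For a connected graph G on n ≥ 2 vertices with minimum degree δ, mc^{nh}_n(G) ≤ ⌊(n − δ + 1)/2⌋. -/

import Mathlib

open SimpleGraph

/-- `w_ψ`-style: `mcA k G` is the max over labelings `ψ : V → {1,…,k}` of the
minimum of `|ψ u − ψ v|` over edges, phrased via `sSup`. -/
noncomputable def mcA {V : Type*} (k : ℕ) (G : SimpleGraph V) : ℕ :=
  sSup {m | ∃ ψ : V → ℕ, (∀ v, ψ v ∈ Finset.Icc 1 k) ∧
    ∀ u v, G.Adj u v → m ≤ Nat.dist (ψ u) (ψ v)}

/-- No-hole anti-n-labeling number: `ψ` is a bijection from `V` onto `{1,…,n}`,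
`n = |V|`. -/
noncomputable def mcNH {V : Type*} [Fintype V] (G : SimpleGraph V) : ℕ :=
  sSup {m | ∃ ψ : V → ℕ, Set.BijOn ψ Set.univ (Set.Icc 1 (Fintype.card V)) ∧
    ∀ u v, G.Adj u v → m ≤ Nat.dist (ψ u) (ψ v)}

theorem stmt_8 {V : Type*} [Fintype V] [DecidableEq V] (G : SimpleGraph V)
    [DecidableRel G.Adj] (hconn : G.Connected) (hn : 2 ≤ Fintype.card V) :
    mcNH G ≤ (Fintype.card V - G.minDegree + 1) / 2 := by
  have hne : Nonempty V := Fintype.card_pos_iff.mp (by omega)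
  set n := Fintype.card V with hn'
  -- every vertex has a neighbor
  have hadj : ∀ v : V, ∃ w, G.Adj v w := by
    intro v
    obtain ⟨u, hu⟩ := Fintype.exists_ne_of_one_lt_card (by omega) v
    obtain ⟨p⟩ := hconn.preconnected v u
    cases p with
    | nil => exact absurd rfl (Ne.symm hu)
    | cons h _ => exact ⟨_, h⟩
  -- minimum degree is positive
  have hδ1 : 1 ≤ G.minDegree := by
    obtain ⟨v', hv'⟩ := G.exists_minimal_degree_vertex
    rw [hv']
    obtain ⟨w, hw⟩ := hadj v'
    exact (G.degree_pos_iff_exists_adj v').mpr ⟨w, hw⟩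
  apply csSup_le'
  rintro m ⟨ψ, hbij, hedge⟩
  rcases Nat.eq_zero_or_pos m with hm0 | hm1
  · simp [hm0]
  have hmem : ∀ v, 1 ≤ ψ v ∧ ψ v ≤ n := fun v => hbij.1 (Set.mem_univ v)
  -- m ≤ n, using an edge
  have hmn : m ≤ n := by
    obtain ⟨v0⟩ := hne
    obtain ⟨w0, hw0⟩ := hadj v0
    have h1 := hedge v0 w0 hw0
    have h2 := hmem v0
    have h3 := hmem w0
    simp only [Nat.dist] at h1
    omega
  -- a vertex labeled m
  obtain ⟨v, -, hv⟩ := hbij.surjOn (Set.mem_Icc.mpr ⟨hm1, hmn⟩)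
  -- its neighbors are labeled in [2m, n]
  have hdeg : G.degree v ≤ (Finset.Icc (2 * m) n).card := by
    rw [← SimpleGraph.card_neighborFinset_eq_degree]
    apply Finset.card_le_card_of_injOn ψ
    · intro w hw
      rw [Finset.mem_coe, SimpleGraph.mem_neighborFinset] at hw
      have h1 := hedge v w hw
      have h2 := hmem w
      rw [hv] at h1
      simp only [Nat.dist] at h1
      rw [Finset.mem_coe, Finset.mem_Icc]
      omega
    · exact fun a _ b _ hab => hbij.injOn (Set.mem_univ a) (Set.mem_univ b) hab
  have hmin := G.minDegree_le_degree v
  rw [Nat.card_Icc] at hdeg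
  omega
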